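/- arXiv:1810.00481 — 3 statements merged into one kernel-verified Lean document; each statement's English description precedes it below -/
import Mathlib

section
/- Let f : 𝔽₂ⁿ → {−1,1} be a Boolean function with Fourier dimension Fdim(f) = r ≥ 1. Then there exist an invertible matrix B ∈ 𝔽₂^{n×n} and t ∈ [r] such that: (1) f̂_B(e₁) ≠ 0; (2) for every j ∈ {2,…,t}, Fdim((f_B)^{(j)}) ≤ r − t; (3) the Fourier support of (f_B)^{(1)} is contained in span{e_{t+1},…,e_r}; and (4) the Fourier coefficient of (f_B)^{(1)} at e_ℓ is nonzero for every ℓ ∈ {t+1,…,r}. -/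
/-- The Fourier coefficient of `f : 𝔽₂ⁿ → ℝ` at `S ∈ 𝔽₂ⁿ`. -/
noncomputable def fCoeff {n : ℕ} (f : (Fin n → ZMod 2) → ℝ) (S : Fin n → ZMod 2) : ℝ :=
  (1 / 2 ^ n) * ∑ x : Fin n → ZMod 2, f x * (-1 : ℝ) ^ (∑ i, (S i).val * (x i).val)

/-- The Fourier support of `f`. -/
noncomputable def fSupp {n : ℕ} (f : (Fin n → ZMod 2) → ℝ) : Set (Fin n → ZMod 2) :=
  {S | fCoeff f S ≠ 0}

/-- The `j`-th standard basis vector of `𝔽₂ⁿ`. -/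
def stdBasis {n : ℕ} (j : Fin n) : Fin n → ZMod 2 :=
  fun i => if i = j then 1 else 0

/-- For invertible `B ∈ 𝔽₂^{n×n}`, the function `f_B(x) = f((B⁻¹)ᵀ x)`. -/
noncomputable def changeBasis {n : ℕ} (f : (Fin n → ZMod 2) → ℝ)
    (B : Matrix (Fin n) (Fin n) (ZMod 2)) : (Fin n → ZMod 2) → ℝ :=
  fun x => f (B⁻¹.transpose.mulVec x)

/-- The restriction `g^{(i)}` of `g`, fixing `x_i = b` where `b ∈ {0,1}` is chosen so that
`(−1)^b·ĝ(e_i) = |ĝ(e_i)|` (and `b = 0` if `ĝ(e_i) = 0`). -/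
noncomputable def restrictAt {n : ℕ} (g : (Fin n → ZMod 2) → ℝ) (i : Fin n) :
    (Fin n → ZMod 2) → ℝ :=
  fun x => g (Function.update x i (if fCoeff g (stdBasis i) < 0 then 1 else 0))

section SecA
variable {n : ℕ}

/-- sign of an 𝔽₂ element -/
noncomputable def sgn (a : ZMod 2) : ℝ := if a = 0 then 1 else -1

/-- inner product over 𝔽₂ -/
def ip {n : ℕ} (S x : Fin n → ZMod 2) : ZMod 2 := ∑ i, S i * x i

lemma sgn_natCast (m : ℕ) : (-1 : ℝ) ^ m = sgn (m : ZMod 2) := by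
  rw [← ZMod.natCast_mod m 2]
  rcases Nat.even_or_odd m with h | h
  · rw [Nat.even_iff.mp h, h.neg_one_pow]; simp [sgn]
  · rw [Nat.odd_iff.mp h, h.neg_one_pow]; simp [sgn]

lemma fCoeff_eq (f : (Fin n → ZMod 2) → ℝ) (S : Fin n → ZMod 2) :
    fCoeff f S = (1 / 2 ^ n) * ∑ x : Fin n → ZMod 2, f x * sgn (ip S x) := by
  unfold fCoeff
  congr 1
  refine Finset.sum_congr rfl fun x _ => ?_
  congr 1
  rw [sgn_natCast]
  congr 1
  unfold ip
  push_cast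
  refine Finset.sum_congr rfl fun i _ => ?_
  simp [ZMod.natCast_val, ZMod.cast_id]

end SecA

section SecB
variable {n : ℕ}

lemma sgn_add (a b : ZMod 2) : sgn (a + b) = sgn a * sgn b := by
  rcases (by decide : ∀ c : ZMod 2, c = 0 ∨ c = 1) a with rfl | rfl <;>
    rcases (by decide : ∀ c : ZMod 2, c = 0 ∨ c = 1) b with rfl | rfl <;>
    simp +decide [sgn]

lemma sgn_ne_zero (a : ZMod 2) : sgn a ≠ 0 := by
  unfold sgn; split <;> norm_num

lemma ip_add_right (S x y : Fin n → ZMod 2) : ip S (x + y) = ip S x + ip S y := by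
  unfold ip
  rw [← Finset.sum_add_distrib]
  exact Finset.sum_congr rfl fun i _ => by simp [mul_add]

lemma ip_add_left (S T x : Fin n → ZMod 2) : ip (S + T) x = ip S x + ip T x := by
  unfold ip
  rw [← Finset.sum_add_distrib]
  exact Finset.sum_congr rfl fun i _ => by simp [add_mul]

lemma ip_stdBasis_right (S : Fin n → ZMod 2) (j : Fin n) : ip S (stdBasis j) = S j := by
  unfold ip stdBasis
  rw [Finset.sum_eq_single j] <;> simp +contextual

lemma ip_stdBasis_left (x : Fin n → ZMod 2) (j : Fin n) : ip (stdBasis j) x = x j := by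
  unfold ip stdBasis
  rw [Finset.sum_eq_single j] <;> simp +contextual

lemma ip_mulVec (S x : Fin n → ZMod 2) (M : Matrix (Fin n) (Fin n) (ZMod 2)) :
    ip S (M.mulVec x) = ip (M.transpose.mulVec S) x := by
  unfold ip Matrix.mulVec dotProduct
  simp only [Finset.mul_sum, Finset.sum_mul]
  rw [Finset.sum_comm]
  refine Finset.sum_congr rfl fun i _ => Finset.sum_congr rfl fun k _ => by
    simp [Matrix.transpose]; ring

lemma fCoeff_changeBasis (f : (Fin n → ZMod 2) → ℝ) (B : Matrix (Fin n) (Fin n) (ZMod 2))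
    (hB : IsUnit B.det) (S : Fin n → ZMod 2) :
    fCoeff (changeBasis f B) S = fCoeff f (B.mulVec S) := by
  have h1 : B⁻¹.transpose.transpose.mulVec S = B⁻¹.mulVec S := by
    rw [Matrix.transpose_transpose]
  rw [fCoeff_eq, fCoeff_eq]
  congr 1
  unfold changeBasis
  -- reindex x ↦ Bᵀ.mulVec x
  have hBt : IsUnit B.transpose.det := by rwa [Matrix.det_transpose]
  have key : ∀ y, B⁻¹.transpose.mulVec (B.transpose.mulVec y) = y := by
    intro y
    rw [Matrix.mulVec_mulVec, Matrix.transpose_nonsing_inv,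
      Matrix.nonsing_inv_mul _ hBt, Matrix.one_mulVec]
  have key2 : ∀ y, B.transpose.mulVec (B⁻¹.transpose.mulVec y) = y := by
    intro y
    rw [Matrix.mulVec_mulVec, Matrix.transpose_nonsing_inv,
      Matrix.mul_nonsing_inv _ hBt, Matrix.one_mulVec]
  let e : (Fin n → ZMod 2) ≃ (Fin n → ZMod 2) :=
    ⟨fun x => B.transpose.mulVec x, fun x => B⁻¹.transpose.mulVec x, key, key2⟩
  rw [← Equiv.sum_comp e (fun x => f (B⁻¹.transpose.mulVec x) * sgn (ip S x))]
  refine Finset.sum_congr rfl fun x _ => ?_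
  show f (B⁻¹.transpose.mulVec (B.transpose.mulVec x)) * sgn (ip S (B.transpose.mulVec x)) = _
  rw [key, ip_mulVec, Matrix.transpose_transpose]

end SecB

section SecC
variable {n : ℕ}

lemma zmod2_ne {a b : ZMod 2} (h : a ≠ b) : a = b + 1 := by revert h; revert a b; decide

lemma zmod2_addself (a : ZMod 2) : a + a = 0 := by revert a; decide

lemma update_eq_add_single {x : Fin n → ZMod 2} {j : Fin n} {b : ZMod 2} (h : x j ≠ b) :
    Function.update x j b = x + stdBasis j := by
  funext i
  rcases eq_or_ne i j with rfl | hij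
  · have h2 : (1 : ZMod 2) + 1 = 0 := by decide
    simp only [Function.update_self, Pi.add_apply]
    rw [show stdBasis i i = 1 from by simp [stdBasis], zmod2_ne h, add_assoc, h2, add_zero]
  · simp [Function.update, hij, stdBasis]

lemma restrictAt_add_single (g : (Fin n → ZMod 2) → ℝ) (j : Fin n) (x : Fin n → ZMod 2) :
    restrictAt g j (x + stdBasis j) = restrictAt g j x := by
  unfold restrictAt
  congr 1
  funext i
  rcases eq_or_ne i j with rfl | hij
  · simp [Function.update]
  · simp [Function.update, hij, stdBasis]

lemma fCoeff_restrictAt_ne (g : (Fin n → ZMod 2) → ℝ) (j : Fin n) (S : Fin n → ZMod 2)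
    (hS : S j ≠ 0) : fCoeff (restrictAt g j) S = 0 := by
  rw [fCoeff_eq]
  have hT : ∑ x : Fin n → ZMod 2, restrictAt g j x * sgn (ip S x) = 0 := by
    set T := ∑ x : Fin n → ZMod 2, restrictAt g j x * sgn (ip S x) with hTdef
    have := Equiv.sum_comp (Equiv.addRight (stdBasis j))
      (fun x => restrictAt g j x * sgn (ip S x))
    have h2 : ∀ x : Fin n → ZMod 2,
        restrictAt g j (x + stdBasis j) * sgn (ip S (x + stdBasis j)) =
        -(restrictAt g j x * sgn (ip S x)) := by
      intro x
      rw [restrictAt_add_single, ip_add_right, sgn_add, ip_stdBasis_right]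
      have : sgn (S j) = -1 := by unfold sgn; rw [if_neg hS]
      rw [this]; ring
    simp only [Equiv.coe_addRight] at this
    rw [Finset.sum_congr rfl (fun x _ => h2 x), Finset.sum_neg_distrib] at this
    have : T = -T := this.symm
    linarith
  rw [hT, mul_zero]

lemma fCoeff_restrictAt_eq (g : (Fin n → ZMod 2) → ℝ) (j : Fin n) (S : Fin n → ZMod 2)
    (hS : S j = 0) :
    fCoeff (restrictAt g j) S = fCoeff g S +
      (if fCoeff g (stdBasis j) < 0 then (-1 : ℝ) else 1) * fCoeff g (S + stdBasis j) := by
  classical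
  set b : ZMod 2 := if fCoeff g (stdBasis j) < 0 then 1 else 0 with hb
  set ε : ℝ := if fCoeff g (stdBasis j) < 0 then (-1 : ℝ) else 1 with hε
  have hεb : ε = sgn b := by
    rw [hε, hb]; split <;> simp [sgn]
  have key : ∑ x : Fin n → ZMod 2, restrictAt g j x * sgn (ip S x) =
      (∑ x : Fin n → ZMod 2, g x * sgn (ip S x)) +
      ε * ∑ x : Fin n → ZMod 2, g x * sgn (ip (S + stdBasis j) x) := by
    have hrhs : (∑ x : Fin n → ZMod 2, g x * sgn (ip S x)) +
        ε * ∑ x : Fin n → ZMod 2, g x * sgn (ip (S + stdBasis j) x) =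
        ∑ x : Fin n → ZMod 2, (if x j = b then 2 * (g x * sgn (ip S x)) else 0) := by
      rw [Finset.mul_sum, ← Finset.sum_add_distrib]
      refine Finset.sum_congr rfl fun x _ => ?_
      rw [ip_add_left, sgn_add, ip_stdBasis_left]
      rcases eq_or_ne (x j) b with hxb | hxb
      · rw [if_pos hxb, hxb, hεb]
        have h1 : sgn b * sgn b = 1 := by unfold sgn; split <;> norm_num
        linear_combination (g x * sgn (ip S x)) * h1
      · rw [if_neg hxb, zmod2_ne hxb, hεb, sgn_add]
        have h3 : sgn b * (sgn b * sgn 1) = -1 := by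
          have h1 : sgn b * sgn b = 1 := by unfold sgn; split <;> norm_num
          have h2 : sgn (1 : ZMod 2) = -1 := by unfold sgn; norm_num
          rw [h2, ← mul_assoc, h1]; ring
        linear_combination (g x * sgn (ip S x)) * h3
    have hlhs : ∑ x : Fin n → ZMod 2, restrictAt g j x * sgn (ip S x) =
        ∑ x : Fin n → ZMod 2, (if x j = b then 2 * (g x * sgn (ip S x)) else 0) := by
      have e1 : ∀ x : Fin n → ZMod 2, x j = b →
          restrictAt g j x * sgn (ip S x) = g x * sgn (ip S x) := by
        intro x hx
        show g (Function.update x j b) * sgn (ip S x) = g x * sgn (ip S x)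
        rw [← hx, Function.update_eq_self]
      have e2 : ∀ x : Fin n → ZMod 2, x j ≠ b →
          restrictAt g j x * sgn (ip S x) =
            g (x + stdBasis j) * sgn (ip S (x + stdBasis j)) := by
        intro x hx
        have h4 : restrictAt g j x = g (x + stdBasis j) := by
          show g (Function.update x j b) = _
          rw [update_eq_add_single hx]
        have h5 : ip S (x + stdBasis j) = ip S x := by
          rw [ip_add_right, ip_stdBasis_right, hS, add_zero]
        rw [h4, h5]
      rw [← Finset.sum_filter_add_sum_filter_not Finset.univ (fun x => x j = b)
            (fun x => restrictAt g j x * sgn (ip S x))]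
      have h6 : ∑ x ∈ Finset.filter (fun x => x j = b) Finset.univ,
            restrictAt g j x * sgn (ip S x)
          = ∑ x ∈ Finset.filter (fun x => x j = b) Finset.univ, g x * sgn (ip S x) :=
        Finset.sum_congr rfl fun x hx => e1 x (Finset.mem_filter.mp hx).2
      have h7 : ∑ x ∈ Finset.filter (fun x => ¬ x j = b) Finset.univ,
            restrictAt g j x * sgn (ip S x)
          = ∑ x ∈ Finset.filter (fun x => x j = b) Finset.univ, g x * sgn (ip S x) := by
        refine Finset.sum_nbij' (fun x => x + stdBasis j) (fun x => x + stdBasis j)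
          ?_ ?_ ?_ ?_ ?_
        · intro a ha
          simp only [Finset.mem_filter, Finset.mem_univ, true_and] at ha ⊢
          rw [Pi.add_apply, show stdBasis j j = 1 from by simp [stdBasis], zmod2_ne ha,
            add_assoc, show (1 : ZMod 2) + 1 = 0 from by decide, add_zero]
        · intro a ha
          simp only [Finset.mem_filter, Finset.mem_univ, true_and] at ha ⊢
          rw [Pi.add_apply, show stdBasis j j = 1 from by simp [stdBasis], ha]
          exact (by decide : ∀ c : ZMod 2, ¬ c + 1 = c) b
        · intro a _
          funext i
          rcases eq_or_ne i j with rfl | hij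
          · simp [stdBasis, zmod2_addself, add_assoc,
              show (1 : ZMod 2) + 1 = 0 from by decide]
          · simp [stdBasis, hij]
        · intro a _
          funext i
          rcases eq_or_ne i j with rfl | hij
          · simp [stdBasis, zmod2_addself, add_assoc,
              show (1 : ZMod 2) + 1 = 0 from by decide]
          · simp [stdBasis, hij]
        · intro a ha
          exact e2 a (Finset.mem_filter.mp ha).2
      rw [h6, h7, ← Finset.sum_filter]
      rw [← Finset.sum_add_distrib]
      exact Finset.sum_congr rfl fun x _ => by ring
    rw [hlhs, hrhs]
  rw [fCoeff_eq, fCoeff_eq, fCoeff_eq, key]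
  ring

end SecC

section SecD
variable {n : ℕ}

/-- Combined coefficient of the restriction along direction `γ`. -/
noncomputable def FF (f : (Fin n → ZMod 2) → ℝ) (γ u : Fin n → ZMod 2) : ℝ :=
  fCoeff f u + (if fCoeff f γ < 0 then (-1 : ℝ) else 1) * fCoeff f (u + γ)

/-- Support of the restriction along `γ`, in original coordinates. -/
noncomputable def Fz (f : (Fin n → ZMod 2) → ℝ) (γ : Fin n → ZMod 2) :
    Set (Fin n → ZMod 2) := {u | FF f γ u ≠ 0}

/-- `Dd f γ` = (dimension of restriction along `γ`) + 1. -/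
noncomputable def Dd (f : (Fin n → ZMod 2) → ℝ) (γ : Fin n → ZMod 2) : ℕ :=
  Module.finrank (ZMod 2) (Submodule.span (ZMod 2) (insert γ (Fz f γ)))

lemma Fz_subset_span (f : (Fin n → ZMod 2) → ℝ) {γ : Fin n → ZMod 2}
    (hγ : γ ∈ Submodule.span (ZMod 2) (fSupp f)) :
    Fz f γ ⊆ ↑(Submodule.span (ZMod 2) (fSupp f)) := by
  intro u hu
  rcases eq_or_ne (fCoeff f u) 0 with h1 | h1
  · rcases eq_or_ne (fCoeff f (u + γ)) 0 with h2 | h2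
    · exfalso; apply hu; unfold FF; rw [h1, h2]; ring
    · have : u + γ ∈ fSupp f := h2
      have hmem : u + γ ∈ Submodule.span (ZMod 2) (fSupp f) := Submodule.subset_span this
      have : u = (u + γ) + γ := by
        funext i; simp [add_assoc, zmod2_addself]
      rw [this]
      exact Submodule.add_mem _ hmem hγ
  · exact Submodule.subset_span h1

lemma stdBasis_eq_single (j : Fin n) : stdBasis j = Pi.single j (1 : ZMod 2) := by
  funext i
  simp [stdBasis, Pi.single_apply]

end SecD

set_option maxHeartbeats 4000000

/-- **Observation.** For every Boolean `f : 𝔽₂ⁿ → {−1,1}` with `Fdim(f) = r ≥ 1`,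
there are an invertible `B ∈ 𝔽₂^{n×n}` and `t ∈ [r]` such that:
(1) `f̂_B(e₁) ≠ 0`;
(2) for every `j ∈ {2,…,t}`, `Fdim((f_B)^{(j)}) ≤ r − t`;
(3) the Fourier support of `(f_B)^{(1)}` is contained in `span{e_{t+1},…,e_r}`;
(4) the Fourier coefficient of `(f_B)^{(1)}` at `e_ℓ` is nonzero for every
`ℓ ∈ {t+1,…,r}`.
(Indices of coordinates are 0-based in this formalization: coordinate `1 ≤ j ≤ n` of the
paper corresponds to the Lean index `j - 1 : Fin n`.) -/
theorem exists_good_basis {n r : ℕ} (hn : 1 ≤ n) (hr : 1 ≤ r)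
    (f : (Fin n → ZMod 2) → ℝ) (hf : ∀ x, f x = 1 ∨ f x = -1)
    (hdim : Module.finrank (ZMod 2) (Submodule.span (ZMod 2) (fSupp f)) = r) :
    ∃ (B : Matrix (Fin n) (Fin n) (ZMod 2)) (t : ℕ), IsUnit B.det ∧ 1 ≤ t ∧ t ≤ r ∧
      fCoeff (changeBasis f B) (stdBasis ⟨0, hn⟩) ≠ 0 ∧
      (∀ j : Fin n, 1 ≤ j.val → j.val < t →
        Module.finrank (ZMod 2)
          (Submodule.span (ZMod 2) (fSupp (restrictAt (changeBasis f B) j))) ≤ r - t) ∧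
      fSupp (restrictAt (changeBasis f B) ⟨0, hn⟩) ⊆
        ↑(Submodule.span (ZMod 2)
          {v | ∃ ℓ : Fin n, t ≤ ℓ.val ∧ ℓ.val < r ∧ v = stdBasis ℓ}) ∧
      (∀ ℓ : Fin n, t ≤ ℓ.val → ℓ.val < r →
        fCoeff (restrictAt (changeBasis f B) ⟨0, hn⟩) (stdBasis ℓ) ≠ 0) := by
  classical
  set W : Submodule (ZMod 2) (Fin n → ZMod 2) := Submodule.span (ZMod 2) (fSupp f) with hW
  have hrn : r ≤ n := by
    have h1 := Submodule.finrank_le W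
    rwa [hdim, Module.finrank_fintype_fun_eq_card, Fintype.card_fin] at h1
  -- a nonzero support element exists
  have hex : ∃ γ, γ ∈ fSupp f ∧ γ ≠ 0 := by
    by_contra h
    push_neg at h
    have hsub : fSupp f ⊆ (⊥ : Submodule (ZMod 2) (Fin n → ZMod 2)) := by
      intro γ hγ
      rcases eq_or_ne γ 0 with rfl | hγ0
      · simp
      · exact absurd (h γ hγ) hγ0
    have : W ≤ ⊥ := Submodule.span_le.mpr hsub
    have : W = ⊥ := le_bot_iff.mp this
    rw [this] at hdim
    rw [finrank_bot] at hdim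
    omega
  -- the maximizing direction α
  have hfin : {γ | γ ∈ fSupp f ∧ γ ≠ 0}.Finite := Set.toFinite _
  have hsFne : hfin.toFinset.Nonempty := by
    obtain ⟨γ, h⟩ := hex
    exact ⟨γ, by rw [Set.Finite.mem_toFinset]; exact h⟩
  obtain ⟨α, hαF, hαmax'⟩ := Finset.exists_max_image hfin.toFinset (Dd f) hsFne
  rw [Set.Finite.mem_toFinset] at hαF
  obtain ⟨hα_supp, hα0⟩ := hαF
  have hαmax : ∀ γ, γ ∈ fSupp f → γ ≠ 0 → Dd f γ ≤ Dd f α := fun γ h1 h2 =>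
    hαmax' γ (by rw [Set.Finite.mem_toFinset]; exact ⟨h1, h2⟩)
  have hαW : α ∈ W := Submodule.subset_span hα_supp
  -- the subspace K
  set K : Submodule (ZMod 2) (Fin n → ZMod 2) :=
    Submodule.span (ZMod 2) (insert α (Fz f α)) with hK
  have hKW : K ≤ W := Submodule.span_le.mpr
    (Set.insert_subset hαW (Fz_subset_span f hαW))
  set m : ℕ := Module.finrank (ZMod 2) K with hm
  have hDdα : Dd f α = m := rfl
  have hmr : m ≤ r := by rw [hm, ← hdim]; exact Submodule.finrank_mono hKW
  have hm1 : 1 ≤ m := by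
    by_contra h
    have hm0 : m = 0 := by omega
    have : K = ⊥ := by
      refine Submodule.finrank_eq_zero.mp ?_
      omega
    have : α ∈ (⊥ : Submodule (ZMod 2) (Fin n → ZMod 2)) :=
      this ▸ Submodule.subset_span (Set.mem_insert _ _)
    exact hα0 (by simpa using this)
  set t : ℕ := r + 1 - m with ht_def
  have ht1 : 1 ≤ t := by omega
  have htr : t ≤ r := by omega
  -- Step 1 : basis of K through α, inside Fz f α
  obtain ⟨bset, hb_sub, hb_mem, hb_span, hb_li⟩ :=
    exists_linearIndepOn_id_extension (LinearIndepOn.singleton hα0 : LinearIndepOn (ZMod 2) id {α})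
      (Set.singleton_subset_iff.mpr (Set.mem_insert α (Fz f α)))
  have hαb : α ∈ bset := hb_mem rfl
  have hspanb : Submodule.span (ZMod 2) bset = K := by
    refine le_antisymm (Submodule.span_mono hb_sub) (Submodule.span_le.mpr hb_span)
  -- Step 2 : extend to a basis of W through the support
  obtain ⟨b2, hb2_sub, hb_b2, hb2_span, hb2_li⟩ :=
    exists_linearIndepOn_id_extension hb_li (show bset ⊆ bset ∪ fSupp f from Set.subset_union_left)
  have hspanb2 : Submodule.span (ZMod 2) b2 = W := by
    refine le_antisymm ?_ ?_
    · refine (Submodule.span_mono hb2_sub).trans ?_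
      rw [Submodule.span_union, hspanb]
      exact sup_le hKW le_rfl
    · exact (Submodule.span_le.mpr (fun x hx => hb2_span (Set.mem_union_right _ hx)))
  -- Step 3 : extend to a basis of the whole space
  obtain ⟨cset, _, hb2_c, hc_span, hc_li⟩ :=
    exists_linearIndepOn_id_extension hb2_li (Set.subset_univ b2)
  have hspanc : Submodule.span (ZMod 2) cset = ⊤ := by
    rw [eq_top_iff, ← Submodule.span_univ (R := ZMod 2)]
    exact Submodule.span_le.mpr hc_span
  -- cardinalities
  haveI : Fintype ↥bset := (Set.toFinite bset).fintype
  haveI : Fintype ↥b2 := (Set.toFinite b2).fintype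
  haveI : Fintype ↥cset := (Set.toFinite cset).fintype
  have hcard_b : bset.ncard = m := by
    rw [Set.ncard_eq_toFinset_card', ← finrank_span_set_eq_card hb_li, hspanb]
  have hcard_b2 : b2.ncard = r := by
    rw [Set.ncard_eq_toFinset_card', ← finrank_span_set_eq_card hb2_li, hspanb2]; exact hdim
  have hcard_c : cset.ncard = n := by
    rw [Set.ncard_eq_toFinset_card', ← finrank_span_set_eq_card hc_li, hspanc, finrank_top,
      Module.finrank_fintype_fun_eq_card, Fintype.card_fin]
  set A1 : Set (Fin n → ZMod 2) := b2 \ bset with hA1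
  set A2 : Set (Fin n → ZMod 2) := bset \ {α} with hA2
  set A3 : Set (Fin n → ZMod 2) := cset \ b2 with hA3
  have hA1card : A1.ncard = t - 1 := by
    rw [hA1, Set.ncard_diff hb_b2, hcard_b2, hcard_b]; omega
  have hA2card : A2.ncard = m - 1 := by
    rw [hA2, Set.ncard_diff (Set.singleton_subset_iff.mpr hαb), hcard_b, Set.ncard_singleton]
  have hA3card : A3.ncard = n - r := by
    rw [hA3, Set.ncard_diff hb2_c, hcard_c, hcard_b2]
  haveI : Fintype ↥A1 := (Set.toFinite A1).fintype
  haveI : Fintype ↥A2 := (Set.toFinite A2).fintype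
  haveI : Fintype ↥A3 := (Set.toFinite A3).fintype
  have e1 : Fin (t - 1) ≃ ↥A1 := (Fintype.equivFinOfCardEq
    (by rw [← Nat.card_eq_fintype_card, Nat.card_coe_set_eq, hA1card])).symm
  have e2 : Fin (m - 1) ≃ ↥A2 := (Fintype.equivFinOfCardEq
    (by rw [← Nat.card_eq_fintype_card, Nat.card_coe_set_eq, hA2card])).symm
  have e3 : Fin (n - r) ≃ ↥A3 := (Fintype.equivFinOfCardEq
    (by rw [← Nat.card_eq_fintype_card, Nat.card_coe_set_eq, hA3card])).symm
  -- the new basis family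
  set v : Fin n → (Fin n → ZMod 2) := fun i =>
    if h0 : i.val = 0 then α
    else if h1 : i.val < t then (e1 ⟨i.val - 1, by omega⟩ : Fin n → ZMod 2)
    else if h2 : i.val < r then (e2 ⟨i.val - t, by omega⟩ : Fin n → ZMod 2)
    else (e3 ⟨i.val - r, by omega⟩ : Fin n → ZMod 2) with hv
  have hv0 : ∀ (i : Fin n), i.val = 0 → v i = α := by
    intro i h; simp only [hv, dif_pos h]
  have hv1 : ∀ (i : Fin n) (h0 : ¬ i.val = 0) (h1 : i.val < t),
      v i = (e1 ⟨i.val - 1, by omega⟩ : Fin n → ZMod 2) := by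
    intro i h0 h1; simp only [hv, dif_neg h0, dif_pos h1]
  have hv2 : ∀ (i : Fin n) (h1 : ¬ i.val < t) (h2 : i.val < r),
      v i = (e2 ⟨i.val - t, by omega⟩ : Fin n → ZMod 2) := by
    intro i h1 h2
    have h0 : ¬ i.val = 0 := by omega
    simp only [hv, dif_neg h0, dif_neg h1, dif_pos h2]
  have hv3 : ∀ (i : Fin n) (h2 : ¬ i.val < r),
      v i = (e3 ⟨i.val - r, by omega⟩ : Fin n → ZMod 2) := by
    intro i h2
    have h0 : ¬ i.val = 0 := by omega
    have h1 : ¬ i.val < t := by omega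
    simp only [hv, dif_neg h0, dif_neg h1, dif_neg h2]
  have hm1mem : ∀ (i : Fin n) (h0 : ¬ i.val = 0) (h1 : i.val < t), v i ∈ A1 := by
    intro i h0 h1; rw [hv1 i h0 h1]; exact (e1 _).2
  have hm2mem : ∀ (i : Fin n) (h1 : ¬ i.val < t) (h2 : i.val < r), v i ∈ A2 := by
    intro i h1 h2; rw [hv2 i h1 h2]; exact (e2 _).2
  have hm3mem : ∀ (i : Fin n) (h2 : ¬ i.val < r), v i ∈ A3 := by
    intro i h2; rw [hv3 i h2]; exact (e3 _).2
  have hαA1 : α ∉ A1 := fun h => h.2 hαb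
  have hαA2 : α ∉ A2 := fun h => h.2 rfl
  have hαA3 : α ∉ A3 := fun h => h.2 (hb_b2 hαb)
  have h12 : ∀ x, x ∈ A1 → x ∉ A2 := fun x h1 h2 => h1.2 h2.1
  have h13 : ∀ x, x ∈ A1 → x ∉ A3 := fun x h1 h3 => h3.2 h1.1
  have h23 : ∀ x, x ∈ A2 → x ∉ A3 := fun x h2 h3 => h3.2 (hb_b2 h2.1)
  -- injectivity of the family
  have hv_inj : Function.Injective v := by
    intro a b hab
    by_cases ha0 : a.val = 0 <;> by_cases hb0 : b.val = 0
    · exact Fin.ext (by omega)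
    · exfalso
      rw [hv0 a ha0] at hab
      by_cases hb1 : b.val < t
      · exact hαA1 (hab ▸ hm1mem b hb0 hb1)
      · by_cases hb2 : b.val < r
        · exact hαA2 (hab ▸ hm2mem b hb1 hb2)
        · exact hαA3 (hab ▸ hm3mem b hb2)
    · exfalso
      rw [hv0 b hb0] at hab
      by_cases ha1 : a.val < t
      · exact hαA1 (hab.symm ▸ hm1mem a ha0 ha1)
      · by_cases ha2 : a.val < r
        · exact hαA2 (hab.symm ▸ hm2mem a ha1 ha2)
        · exact hαA3 (hab.symm ▸ hm3mem a ha2)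
    · by_cases ha1 : a.val < t <;> by_cases hb1 : b.val < t
      · rw [hv1 a ha0 ha1, hv1 b hb0 hb1] at hab
        have h' := e1.injective (Subtype.coe_injective hab)
        have h'' : a.val - 1 = b.val - 1 := congrArg Fin.val h'
        exact Fin.ext (by omega)
      · exfalso
        by_cases hb2 : b.val < r
        · exact h12 _ (hm1mem a ha0 ha1) (hab ▸ hm2mem b hb1 hb2)
        · exact h13 _ (hm1mem a ha0 ha1) (hab ▸ hm3mem b hb2)
      · exfalso
        by_cases ha2 : a.val < r
        · exact h12 _ (hm1mem b hb0 hb1) (hab.symm ▸ hm2mem a ha1 ha2)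
        · exact h13 _ (hm1mem b hb0 hb1) (hab.symm ▸ hm3mem a ha2)
      · by_cases ha2 : a.val < r <;> by_cases hb2 : b.val < r
        · rw [hv2 a ha1 ha2, hv2 b hb1 hb2] at hab
          have h' := e2.injective (Subtype.coe_injective hab)
          have h'' : a.val - t = b.val - t := congrArg Fin.val h'
          exact Fin.ext (by omega)
        · exact absurd (hab ▸ hm3mem b hb2) (h23 _ (hm2mem a ha1 ha2))
        · exact absurd (hab.symm ▸ hm3mem a ha2) (h23 _ (hm2mem b hb1 hb2))
        · rw [hv3 a ha2, hv3 b hb2] at hab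
          have h' := e3.injective (Subtype.coe_injective hab)
          have h'' : a.val - r = b.val - r := congrArg Fin.val h'
          exact Fin.ext (by omega)
  have hbc : bset ⊆ cset := fun x hx => hb2_c (hb_b2 hx)
  have hv_mem_c : ∀ i, v i ∈ cset := by
    intro i
    by_cases h0 : i.val = 0
    · rw [hv0 i h0]; exact hbc hαb
    · by_cases h1 : i.val < t
      · exact hb2_c (hm1mem i h0 h1).1
      · by_cases h2 : i.val < r
        · exact hbc (hm2mem i h1 h2).1
        · exact (hm3mem i h2).1
  have hli_v : LinearIndependent (ZMod 2) v :=
    hc_li.comp (fun i => (⟨v i, hv_mem_c i⟩ : ↥cset))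
      (fun a b hab => hv_inj (congrArg Subtype.val hab))
  -- the basis and the matrix
  haveI : Nonempty (Fin n) := ⟨⟨0, hn⟩⟩
  have hcardn : Fintype.card (Fin n) = Module.finrank (ZMod 2) (Fin n → ZMod 2) := by
    rw [Fintype.card_fin, Module.finrank_fintype_fun_eq_card, Fintype.card_fin]
  set bas := basisOfLinearIndependentOfCardEqFinrank hli_v hcardn with hbas_def
  have hbas : ∀ i, bas i = v i := by
    intro i
    rw [hbas_def]
    exact congrFun (coe_basisOfLinearIndependentOfCardEqFinrank hli_v hcardn) i
  set E := (Pi.basisFun (ZMod 2) (Fin n)).equiv bas (Equiv.refl _) with hE_def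
  have hE : ∀ i, E (stdBasis i) = v i := by
    intro i
    have hstd : stdBasis i = Pi.basisFun (ZMod 2) (Fin n) i := by
      rw [stdBasis_eq_single]
      simp [Pi.basisFun_apply]
    rw [hstd, hE_def, Module.Basis.equiv_apply, Equiv.refl_apply, hbas]
  set B := LinearMap.toMatrix' (E.toLinearMap) with hB_def
  have hBdet : IsUnit B.det := by
    rw [hB_def, LinearMap.det_toMatrix']
    exact E.isUnit_det'
  have hmulvec : ∀ x, B.mulVec x = E x := by
    intro x
    rw [hB_def, ← Matrix.toLin'_apply, Matrix.toLin'_toMatrix']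
    rfl
  set g := changeBasis f B with hg_def
  have hgS : ∀ S, fCoeff g S = fCoeff f (E S) := fun S => by
    rw [hg_def, fCoeff_changeBasis f B hBdet S, hmulvec]
  have hbridge : ∀ (j : Fin n) (S : Fin n → ZMod 2), S j = 0 →
      fCoeff (restrictAt g j) S = FF f (v j) (E S) := by
    intro j S hSj
    rw [fCoeff_restrictAt_eq g j S hSj, hgS, hgS, hgS, hE j, map_add, hE j]
    unfold FF
    rfl
  refine ⟨B, t, hBdet, ht1, htr, ?_, ?_, ?_, ?_⟩
  · -- (1)
    have h1 : fCoeff g (stdBasis ⟨0, hn⟩) = fCoeff f α := by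
      rw [hgS, hE, hv0 ⟨0, hn⟩ rfl]
    rw [h1]
    exact hα_supp
  · -- (2)
    intro j hj1 hjt
    have hj0 : ¬ j.val = 0 := by omega
    have hjtl : j.val < t := hjt
    set P := Submodule.span (ZMod 2) (fSupp (restrictAt g j)) with hP
    have hsupp_zero : ∀ S, S ∈ fSupp (restrictAt g j) → S j = 0 := by
      intro S hS
      by_contra h
      exact hS (fCoeff_restrictAt_ne g j S h)
    have hsupp_Fz : ∀ S, S ∈ fSupp (restrictAt g j) → E S ∈ Fz f (v j) := by
      intro S hS
      have h0 := hsupp_zero S hS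
      have hb := hbridge j S h0
      intro hc
      exact hS (by rw [hb]; exact hc)
    have hPle : P ≤ LinearMap.ker
        (LinearMap.proj (R := ZMod 2) (φ := fun _ : Fin n => ZMod 2) j) := by
      rw [hP]
      refine Submodule.span_le.mpr ?_
      intro S hS
      simpa [LinearMap.mem_ker] using hsupp_zero S hS
    have hstdP : stdBasis j ∉ P := by
      intro h
      have h2 := hPle h
      rw [LinearMap.mem_ker] at h2
      have h3 : stdBasis j j = (0 : ZMod 2) := h2
      rw [show stdBasis j j = (1 : ZMod 2) from by simp [stdBasis]] at h3
      exact one_ne_zero h3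
    set Kj := Submodule.span (ZMod 2) (insert (v j) (Fz f (v j))) with hKj
    have hmaple : Submodule.map (E : (Fin n → ZMod 2) →ₗ[ZMod 2] (Fin n → ZMod 2)) P ≤ Kj := by
      rw [hP, Submodule.map_span]
      refine Submodule.span_le.mpr ?_
      rintro x ⟨S, hS, rfl⟩
      exact Submodule.subset_span (Set.mem_insert_of_mem _ (hsupp_Fz S hS))
    have hvjKj : v j ∈ Kj := Submodule.subset_span (Set.mem_insert _ _)
    have hvjP : v j ∉ Submodule.map (E : (Fin n → ZMod 2) →ₗ[ZMod 2] (Fin n → ZMod 2)) P := by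
      rintro ⟨S, hS, hES⟩
      have hSstd : S = stdBasis j := by
        apply E.injective
        rw [hE]
        exact hES
      exact hstdP (hSstd ▸ hS)
    have hlt : Submodule.map (E : (Fin n → ZMod 2) →ₗ[ZMod 2] (Fin n → ZMod 2)) P < Kj :=
      lt_of_le_of_ne hmaple (fun h => hvjP (h.symm ▸ hvjKj))
    have hrank : Module.finrank (ZMod 2) P < Dd f (v j) := by
      have h1 := Submodule.finrank_lt_finrank_of_lt hlt
      rwa [LinearEquiv.finrank_map_eq] at h1
    have hvj_supp : v j ∈ fSupp f := by
      have hmem := hm1mem j hj0 hjtl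
      rcases hb2_sub hmem.1 with h | h
      · exact absurd h hmem.2
      · exact h
    have hvj0 : v j ≠ 0 := hli_v.ne_zero j
    have hmax := hαmax (v j) hvj_supp hvj0
    omega
  · -- (3)
    intro S hS
    have hS0 : S ⟨0, hn⟩ = 0 := by
      by_contra h
      exact hS (fCoeff_restrictAt_ne g ⟨0, hn⟩ S h)
    have hval : fCoeff (restrictAt g ⟨0, hn⟩) S = FF f α (E S) := by
      rw [hbridge ⟨0, hn⟩ S hS0, hv0 ⟨0, hn⟩ rfl]
    have hESZ : E S ∈ Fz f α := by
      intro hc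
      exact hS (by rw [hval]; exact hc)
    set Tset : Set (Fin n → ZMod 2) :=
      {w | ∃ ℓ : Fin n, t ≤ ℓ.val ∧ ℓ.val < r ∧ w = stdBasis ℓ} with hT
    have hbsub : bset ⊆ E '' (insert (stdBasis ⟨0, hn⟩) Tset) := by
      intro w hw
      rcases eq_or_ne w α with rfl | hwα
      · exact ⟨stdBasis ⟨0, hn⟩, Set.mem_insert _ _, by rw [hE, hv0 ⟨0, hn⟩ rfl]⟩
      · have hwA2 : w ∈ A2 := ⟨hw, hwα⟩
        set k := e2.symm ⟨w, hwA2⟩ with hk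
        have hkval : k.val < m - 1 := k.isLt
        have hℓn : t + k.val < n := by omega
        refine ⟨stdBasis ⟨t + k.val, hℓn⟩, ?_, ?_⟩
        · refine Set.mem_insert_of_mem _ ⟨⟨t + k.val, hℓn⟩, ?_, ?_, rfl⟩
          · exact Nat.le_add_right t k.val
          · show t + k.val < r
            omega
        · rw [hE]
          have hlt' : ¬ (t + k.val) < t := by omega
          have hltr : (t + k.val) < r := by omega
          rw [hv2 ⟨t + k.val, hℓn⟩ hlt' hltr]
          have hidx : (⟨t + k.val - t, by omega⟩ : Fin (m - 1)) = k := by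
            apply Fin.ext
            show t + k.val - t = k.val
            omega
          rw [hidx, hk, Equiv.apply_symm_apply]
    have hKle : K ≤ Submodule.map (E : (Fin n → ZMod 2) →ₗ[ZMod 2] (Fin n → ZMod 2))
        (Submodule.span (ZMod 2) (insert (stdBasis ⟨0, hn⟩) Tset)) := by
      rw [← hspanb, Submodule.map_span]
      exact Submodule.span_mono hbsub
    have hESK : E S ∈ K := Submodule.subset_span (Set.mem_insert_of_mem _ hESZ)
    obtain ⟨S', hS', hES'⟩ := hKle hESK
    have hSS' : S' = S := E.injective hES'
    rw [hSS'] at hS'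
    have hS2 : S ∈ Submodule.span (ZMod 2) (insert (stdBasis ⟨0, hn⟩) Tset) := hS'
    rw [Submodule.mem_span_insert] at hS2
    obtain ⟨a, z, hz, hSz⟩ := hS2
    have hzker : ∀ w ∈ Tset, w ⟨0, hn⟩ = (0 : ZMod 2) := by
      rintro w ⟨ℓ, hℓ1, hℓ2, rfl⟩
      have : (⟨0, hn⟩ : Fin n) ≠ ℓ := by
        intro h
        have h2 : (0 : ℕ) = ℓ.val := congrArg Fin.val h
        omega
      simp [stdBasis, this]
    have hz0 : z ⟨0, hn⟩ = 0 := by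
      have hle : Submodule.span (ZMod 2) Tset ≤ LinearMap.ker
          (LinearMap.proj (R := ZMod 2) (φ := fun _ : Fin n => ZMod 2) ⟨0, hn⟩) := by
        refine Submodule.span_le.mpr ?_
        intro w hw
        simpa [LinearMap.mem_ker] using hzker w hw
      exact hle hz
    have ha : a = 0 := by
      have hev := congrFun hSz ⟨0, hn⟩
      rw [hS0] at hev
      have : (0 : ZMod 2) = a * 1 + z ⟨0, hn⟩ := by
        simpa [stdBasis] using hev
      rw [hz0, add_zero, mul_one] at this
      exact this.symm
    rw [hSz, ha, zero_smul, zero_add]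
    exact hz
  · -- (4)
    intro ℓ htℓ hℓr
    have h0 : stdBasis ℓ ⟨0, hn⟩ = 0 := by
      have : (⟨0, hn⟩ : Fin n) ≠ ℓ := by
        intro h
        have h2 : (0 : ℕ) = ℓ.val := congrArg Fin.val h
        omega
      simp [stdBasis, this]
    have hval := hbridge ⟨0, hn⟩ (stdBasis ℓ) h0
    rw [hv0 ⟨0, hn⟩ rfl] at hval
    rw [hval, hE]
    have hℓt : ¬ ℓ.val < t := by omega
    have hmem := hm2mem ℓ hℓt hℓr
    rcases hb_sub hmem.1 with h | h
    · exact absurd h hmem.2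
    · exact h
end

section
/- Let m ≥ 1 and let g : 𝔽₂^m → {−1,1} be a function that depends on all of its m variables (i.e., for every i ∈ [m] there exists x with g(x) ≠ g(x^i), where x^i flips the i-th bit of x). Suppose that for every i ∈ [m] there exists b_i ∈ {0,1} such that g is constant on the set {x : x_i = b_i}. Then g is, up to negations of input and output bits, the m-bit AND function: there exist v ∈ {−1,1} and a point c ∈ 𝔽₂^m (namely c_i = 1 − b_i for all i) such that g(c) = −v and g(x) = v for every x ≠ c. -/
/-- Let `g : 𝔽₂^m → {−1,1}` depend on all of its `m` variables, and suppose for every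
`i ∈ [m]` there is a bit `b_i` such that `g` is constant on `{x : x_i = b_i}`. Then `g`
is, up to negations of input and output bits, the `m`-bit AND function: there is
`v ∈ {−1,1}` such that, with `c` given by `c_i = 1 − b_i`, we have `g(c) = −v` and
`g(x) = v` for every `x ≠ c`. -/
theorem and_like_of_collapsing {m : ℕ} (hm : 1 ≤ m)
    (g : (Fin m → ZMod 2) → ℝ) (hg : ∀ x, g x = 1 ∨ g x = -1)
    (hdep : ∀ i : Fin m, ∃ x : Fin m → ZMod 2,
      g x ≠ g (Function.update x i (x i + 1)))
    (b : Fin m → ZMod 2)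
    (hb : ∀ i : Fin m, ∀ x y : Fin m → ZMod 2, x i = b i → y i = b i → g x = g y) :
    ∃ v : ℝ, (v = 1 ∨ v = -1) ∧
      g (fun i => 1 - b i) = -v ∧
      ∀ x : Fin m → ZMod 2, x ≠ (fun i => 1 - b i) → g x = v := by
  set c : Fin m → ZMod 2 := fun i => 1 - b i with hc
  have hzmod : ∀ a d : ZMod 2, a ≠ 1 - d → a = d := by decide
  have hv : ∀ x : Fin m → ZMod 2, x ≠ c → g x = g b := by
    intro x hx
    obtain ⟨i, hi⟩ := Function.ne_iff.mp hx
    exact hb i x b (hzmod _ _ hi) rfl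
  have hne : g c ≠ g b := by
    obtain ⟨x, hi⟩ := hdep ⟨0, hm⟩
    set j : Fin m := ⟨0, hm⟩ with hj
    set x' := Function.update x j (x j + 1) with hx'
    have hne2 : x ≠ x' := by
      intro h
      have := congrFun h j
      rw [hx', Function.update_self] at this
      exact one_ne_zero (by linear_combination (norm := ring_nf) -this : (1 : ZMod 2) = 0)
    by_cases h1 : x = c
    · have h2 : x' ≠ c := fun h => hne2 (h1.trans h.symm)
      rw [← h1]
      intro h
      exact hi (h.trans (hv x' h2).symm)
    · by_cases h2 : x' = c
      · rw [← h2]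
        intro h
        exact hi ((hv x h1).trans h.symm)
      · exact absurd ((hv x h1).trans (hv x' h2).symm) hi
  refine ⟨g b, hg b, ?_, hv⟩
  rcases hg c with h | h <;> rcases hg b with h' | h' <;>
    simp_all
end

section
/- Let N ≥ 1, let 𝒞 ⊆ {0,1}^N be a finite nonempty set of strings, and let μ be a probability distribution on 𝒞 with max_{c∈𝒞} μ(c) ≤ 5/6. Let A > 0 be such that for every matrix Γ ∈ ℝ^{𝒞×𝒞} with nonnegative entries and zeros on the diagonal, ‖Γ‖ ≤ A · max_{i∈[N]} ‖Γ ∘ D_i‖. Then there exists an index i ∈ [N] such that min(μ({c : c_i = 0}), μ({c : c_i = 1})) ≥ 1/(36A²). -/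
/-- The ℓ₂→ℓ₂ operator norm (largest singular value) of a real matrix. -/
noncomputable def l2OpNorm {α β : Type*} [Fintype α] [Fintype β] [DecidableEq β]
    (M : Matrix α β ℝ) : ℝ :=
  ‖LinearMap.toContinuousLinearMap (Matrix.toEuclideanLin M)‖

/-- The 0/1 matrix `D_i` whose `(c,c')` entry is 1 iff `c_i ≠ c'_i`. -/
def Dmat {N : ℕ} (𝒞 : Finset (Fin N → Bool)) (i : Fin N) :
    Matrix {c // c ∈ 𝒞} {c // c ∈ 𝒞} ℝ :=
  Matrix.of fun c c' => if (c : Fin N → Bool) i = (c' : Fin N → Bool) i then 0 else 1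

section helpersBQ

variable {α : Type*} [Fintype α] [DecidableEq α]

lemma BQ.toEuclideanLin_apply' (M : Matrix α α ℝ) (x : EuclideanSpace ℝ α) (c : α) :
    Matrix.toEuclideanLin M x c = ∑ c', M c c' * x c' := by
  simp [Matrix.toEuclideanLin_apply, Matrix.mulVec, dotProduct]

lemma BQ.l2OpNorm_le' (M : Matrix α α ℝ) (b : ℝ) (hb : 0 ≤ b)
    (h : ∀ x : EuclideanSpace ℝ α, ‖Matrix.toEuclideanLin M x‖ ≤ b * ‖x‖) :
    l2OpNorm M ≤ b :=
  ContinuousLinearMap.opNorm_le_bound _ hb (fun x => by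
    rw [LinearMap.coe_toContinuousLinearMap']; exact h x)

lemma BQ.le_l2OpNorm' (M : Matrix α α ℝ) (x : EuclideanSpace ℝ α) (hx : ‖x‖ = 1) :
    (inner ℝ x (Matrix.toEuclideanLin M x) : ℝ) ≤ l2OpNorm M := by
  have h1 : (inner ℝ x (Matrix.toEuclideanLin M x) : ℝ)
      ≤ ‖x‖ * ‖Matrix.toEuclideanLin M x‖ := real_inner_le_norm _ _
  have h2 : ‖Matrix.toEuclideanLin M x‖ ≤ l2OpNorm M * ‖x‖ := by
    have := (LinearMap.toContinuousLinearMap (Matrix.toEuclideanLin M)).le_opNorm x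
    rwa [LinearMap.coe_toContinuousLinearMap'] at this
  rw [hx, one_mul] at h1
  rw [hx, mul_one] at h2
  exact h1.trans h2

end helpersBQ

/-- **Balanced-query lemma.** Let `𝒞 ⊆ {0,1}^N` be finite and nonempty, `μ` a probability
distribution on `𝒞` with `max_c μ(c) ≤ 5/6`, and `A > 0` such that every nonnegative
matrix `Γ` with zero diagonal satisfies `‖Γ‖ ≤ A · max_i ‖Γ ∘ D_i‖`. Then some index
`i ∈ [N]` satisfies `min(μ(C_i = 0), μ(C_i = 1)) ≥ 1/(36A²)`. -/
theorem exists_balanced_query {N : ℕ} (hN : 1 ≤ N)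
    (𝒞 : Finset (Fin N → Bool)) (h𝒞 : 𝒞.Nonempty)
    (μ : {c // c ∈ 𝒞} → ℝ) (hμ0 : ∀ c, 0 ≤ μ c) (hμ1 : ∑ c, μ c = 1)
    (hμmax : ∀ c, μ c ≤ 5 / 6)
    (A : ℝ) (hA : 0 < A)
    (hadv : ∀ Γ : Matrix {c // c ∈ 𝒞} {c // c ∈ 𝒞} ℝ,
      (∀ c c', 0 ≤ Γ c c') → (∀ c, Γ c c = 0) →
      l2OpNorm Γ ≤ A * ⨆ i : Fin N,
        l2OpNorm (Matrix.of fun c c' => Γ c c' * Dmat 𝒞 i c c')) :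
    ∃ i : Fin N,
      1 / (36 * A ^ 2) ≤
        min (∑ c : {c // c ∈ 𝒞}, if (c : Fin N → Bool) i = false then μ c else 0)
            (∑ c : {c // c ∈ 𝒞}, if (c : Fin N → Bool) i = true then μ c else 0) := by
  classical
  have hNe : Nonempty (Fin N) := ⟨⟨0, hN⟩⟩
  have hCne : Nonempty {c // c ∈ 𝒞} := ⟨⟨h𝒞.choose, h𝒞.choose_spec⟩⟩
  let p : Fin N → ℝ := fun i => ∑ c : {c // c ∈ 𝒞}, if (c : Fin N → Bool) i = false then μ c else 0
  let q : Fin N → ℝ := fun i => ∑ c : {c // c ∈ 𝒞}, if (c : Fin N → Bool) i = true then μ c else 0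
  have hp0 : ∀ i, 0 ≤ p i := fun i =>
    Finset.sum_nonneg fun c _ => by split_ifs; exacts [hμ0 c, le_refl 0]
  have hq0 : ∀ i, 0 ≤ q i := fun i =>
    Finset.sum_nonneg fun c _ => by split_ifs; exacts [hμ0 c, le_refl 0]
  have hpq1 : ∀ i, p i + q i = 1 := by
    intro i
    rw [← hμ1, ← Finset.sum_add_distrib]
    apply Finset.sum_congr rfl
    intro c _
    cases h : (c : Fin N → Bool) i <;> simp [h]
  have hp1 : ∀ i, p i ≤ 1 := fun i => by nlinarith [hq0 i, hpq1 i]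
  have hq1 : ∀ i, q i ≤ 1 := fun i => by nlinarith [hp0 i, hpq1 i]
  -- the adversary matrix
  set Γ : Matrix {c // c ∈ 𝒞} {c // c ∈ 𝒞} ℝ :=
    Matrix.of (fun c c' => if c = c' then 0 else Real.sqrt (μ c) * Real.sqrt (μ c')) with hΓ
  have hΓnn : ∀ c c', 0 ≤ Γ c c' := by
    intro c c'; simp only [hΓ, Matrix.of_apply]
    split_ifs
    · exact le_refl 0
    · positivity
  have hΓdiag : ∀ c, Γ c c = 0 := by intro c; simp [hΓ]
  -- the test vector
  set x : EuclideanSpace ℝ {c // c ∈ 𝒞} := (WithLp.equiv 2 ({c // c ∈ 𝒞} → ℝ)).symm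
    (fun c => Real.sqrt (μ c)) with hxdef
  have hxc : ∀ c : {c // c ∈ 𝒞}, x c = Real.sqrt (μ c) := fun c => rfl
  have hx : ‖x‖ = 1 := by
    rw [EuclideanSpace.norm_eq]
    have h1 : ∀ c : {c // c ∈ 𝒞}, ‖x c‖ ^ 2 = μ c := fun c => by
      rw [hxc, Real.norm_eq_abs, sq_abs, Real.sq_sqrt (hμ0 c)]
    rw [Finset.sum_congr rfl (fun c _ => h1 c), hμ1, Real.sqrt_one]
  -- lower bound on the norm of Γ
  have hΓlow : 1 / 6 ≤ l2OpNorm Γ := by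
    have hinner : (inner ℝ x (Matrix.toEuclideanLin Γ x) : ℝ) = 1 - ∑ c : {c // c ∈ 𝒞}, μ c ^ 2 := by
      simp only [PiLp.inner_apply, RCLike.inner_apply, conj_trivial,
        BQ.toEuclideanLin_apply']
      have hterm : ∀ c c' : {c // c ∈ 𝒞},
          x c * (Γ c c' * x c') = μ c * μ c' - (if c = c' then μ c * μ c' else 0) := by
        intro c c'
        rw [hxc, hxc]
        simp only [hΓ, Matrix.of_apply]
        split_ifs with h
        · simp
        · have : Real.sqrt (μ c) * (Real.sqrt (μ c) * Real.sqrt (μ c') * Real.sqrt (μ c'))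
              = (Real.sqrt (μ c) * Real.sqrt (μ c)) * (Real.sqrt (μ c') * Real.sqrt (μ c')) := by
            ring
          rw [this, Real.mul_self_sqrt (hμ0 c), Real.mul_self_sqrt (hμ0 c')]
          ring
      refine (Finset.sum_congr rfl (fun c _ => mul_comm _ _)).trans ?_
      calc (∑ c : {c // c ∈ 𝒞}, x c * ∑ c', Γ c c' * x c')
          = ∑ c : {c // c ∈ 𝒞}, ∑ c' : {c // c ∈ 𝒞}, x c * (Γ c c' * x c') := by
            apply Finset.sum_congr rfl; intro c _; rw [Finset.mul_sum]
        _ = ∑ c : {c // c ∈ 𝒞}, ∑ c' : {c // c ∈ 𝒞}, (μ c * μ c' - if c = c' then μ c * μ c' else 0) := by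
            apply Finset.sum_congr rfl; intro c _
            apply Finset.sum_congr rfl; intro c' _
            exact hterm c c'
        _ = ∑ c : {c // c ∈ 𝒞}, (μ c * ∑ c' : {c // c ∈ 𝒞}, μ c' - μ c * μ c) := by
            apply Finset.sum_congr rfl; intro c _
            rw [Finset.sum_sub_distrib, ← Finset.mul_sum, Finset.sum_ite_eq]
            simp
        _ = 1 - ∑ c : {c // c ∈ 𝒞}, μ c ^ 2 := by
            rw [Finset.sum_sub_distrib, ← Finset.sum_mul, hμ1]
            simp [sq]
    have hsq : ∑ c : {c // c ∈ 𝒞}, μ c ^ 2 ≤ 5 / 6 := by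
      calc ∑ c : {c // c ∈ 𝒞}, μ c ^ 2 ≤ ∑ c : {c // c ∈ 𝒞}, (5 / 6) * μ c := by
            apply Finset.sum_le_sum
            intro c _
            rw [sq]
            exact mul_le_mul_of_nonneg_right (hμmax c) (hμ0 c)
        _ = 5 / 6 := by rw [← Finset.mul_sum, hμ1, mul_one]
    have := BQ.le_l2OpNorm' Γ x hx
    rw [hinner] at this
    linarith
  -- upper bound on the norms of the Hadamard products
  have hMle : ∀ i : Fin N,
      l2OpNorm (Matrix.of fun c c' : {c // c ∈ 𝒞} => Γ c c' * Dmat 𝒞 i c c')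
        ≤ Real.sqrt (p i * q i) := by
    intro i
    set M : Matrix {c // c ∈ 𝒞} {c // c ∈ 𝒞} ℝ := Matrix.of fun c c' : {c // c ∈ 𝒞} => Γ c c' * Dmat 𝒞 i c c' with hM
    have hMent : ∀ c c' : {c // c ∈ 𝒞}, M c c' =
        if (c : Fin N → Bool) i = (c' : Fin N → Bool) i then 0
        else Real.sqrt (μ c) * Real.sqrt (μ c') := by
      intro c c'
      simp only [hM, hΓ, Dmat, Matrix.of_apply]
      by_cases h : (c : Fin N → Bool) i = (c' : Fin N → Bool) i
      · simp [h]
      · have hne : c ≠ c' := fun hcc => h (by rw [hcc])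
        simp [h, hne]
    apply BQ.l2OpNorm_le' M _ (Real.sqrt_nonneg _)
    intro y
    set S : Bool → ℝ := fun b =>
      ∑ c : {c // c ∈ 𝒞}, if (c : Fin N → Bool) i = b then Real.sqrt (μ c) * y c else 0 with hS
    set T : Bool → ℝ := fun b =>
      ∑ c : {c // c ∈ 𝒞}, if (c : Fin N → Bool) i = b then y c ^ 2 else 0 with hT
    have hT0 : ∀ b, 0 ≤ T b := fun b =>
      Finset.sum_nonneg fun c _ => by split_ifs; exacts [sq_nonneg _, le_refl 0]
    have hMy : ∀ c : {c // c ∈ 𝒞}, Matrix.toEuclideanLin M y c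
        = Real.sqrt (μ c) * S (!(c : Fin N → Bool) i) := by
      intro c
      rw [BQ.toEuclideanLin_apply', hS, Finset.mul_sum]
      apply Finset.sum_congr rfl
      intro c' _
      rw [hMent]
      cases h : (c : Fin N → Bool) i <;> cases h' : (c' : Fin N → Bool) i <;>
        simp [h, h'] <;> ring
    have hCS : ∀ b : Bool, S b ^ 2 ≤
        (∑ c : {c // c ∈ 𝒞}, if (c : Fin N → Bool) i = b then μ c else 0) * T b := by
      intro b
      have key := Finset.sum_mul_sq_le_sq_mul_sq Finset.univ
        (fun c : {c // c ∈ 𝒞} => if (c : Fin N → Bool) i = b then Real.sqrt (μ c) else 0)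
        (fun c : {c // c ∈ 𝒞} => if (c : Fin N → Bool) i = b then y c else 0)
      have e1 : (∑ c : {c // c ∈ 𝒞}, (if (c : Fin N → Bool) i = b then Real.sqrt (μ c) else 0)
          * (if (c : Fin N → Bool) i = b then y c else 0)) = S b := by
        apply Finset.sum_congr rfl; intro c _; split_ifs <;> simp
      have e2 : (∑ c : {c // c ∈ 𝒞}, (if (c : Fin N → Bool) i = b then Real.sqrt (μ c) else 0) ^ 2)
          = ∑ c : {c // c ∈ 𝒞}, if (c : Fin N → Bool) i = b then μ c else 0 := by
        apply Finset.sum_congr rfl; intro c _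
        split_ifs <;> simp [Real.sq_sqrt (hμ0 c)]
      have e3 : (∑ c : {c // c ∈ 𝒞}, (if (c : Fin N → Bool) i = b then y c else 0) ^ 2) = T b := by
        apply Finset.sum_congr rfl; intro c _; split_ifs <;> simp
      rw [e1, e2, e3] at key
      exact key
    have hCSt : S true ^ 2 ≤ q i * T true := hCS true
    have hCSf : S false ^ 2 ≤ p i * T false := hCS false
    have hsplit : ∑ c : {c // c ∈ 𝒞}, (Real.sqrt (μ c) * S (!(c : Fin N → Bool) i)) ^ 2
        = p i * S true ^ 2 + q i * S false ^ 2 := by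
      show _ = (∑ c : {c // c ∈ 𝒞}, if (c : Fin N → Bool) i = false then μ c else 0) * S true ^ 2
        + (∑ c : {c // c ∈ 𝒞}, if (c : Fin N → Bool) i = true then μ c else 0) * S false ^ 2
      rw [Finset.sum_mul, Finset.sum_mul, ← Finset.sum_add_distrib]
      apply Finset.sum_congr rfl
      intro c _
      rw [mul_pow, Real.sq_sqrt (hμ0 c)]
      cases h : (c : Fin N → Bool) i <;> simp [h]
    have hTsum : T true + T false = ∑ c : {c // c ∈ 𝒞}, y c ^ 2 := by
      rw [hT, ← Finset.sum_add_distrib]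
      apply Finset.sum_congr rfl
      intro c _
      cases h : (c : Fin N → Bool) i <;> simp [h]
    have hbound : ∑ c : {c // c ∈ 𝒞}, (Real.sqrt (μ c) * S (!(c : Fin N → Bool) i)) ^ 2
        ≤ p i * q i * ∑ c : {c // c ∈ 𝒞}, y c ^ 2 := by
      rw [hsplit, ← hTsum]
      have h1 : p i * S true ^ 2 ≤ p i * (q i * T true) :=
        mul_le_mul_of_nonneg_left hCSt (hp0 i)
      have h2 : q i * S false ^ 2 ≤ q i * (p i * T false) :=
        mul_le_mul_of_nonneg_left hCSf (hq0 i)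
      nlinarith
    rw [EuclideanSpace.norm_eq, EuclideanSpace.norm_eq]
    have e4 : ∀ c : {c // c ∈ 𝒞}, ‖Matrix.toEuclideanLin M y c‖ ^ 2
        = (Real.sqrt (μ c) * S (!(c : Fin N → Bool) i)) ^ 2 := fun c => by
      rw [Real.norm_eq_abs, sq_abs, hMy]
    have e5 : ∀ c : {c // c ∈ 𝒞}, ‖y c‖ ^ 2 = y c ^ 2 := fun c => by
      rw [Real.norm_eq_abs, sq_abs]
    rw [Finset.sum_congr rfl (fun c _ => e4 c), Finset.sum_congr rfl (fun c _ => e5 c)]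
    calc Real.sqrt (∑ c : {c // c ∈ 𝒞}, (Real.sqrt (μ c) * S (!(c : Fin N → Bool) i)) ^ 2)
        ≤ Real.sqrt (p i * q i * ∑ c : {c // c ∈ 𝒞}, y c ^ 2) := Real.sqrt_le_sqrt hbound
      _ = Real.sqrt (p i * q i) * Real.sqrt (∑ c : {c // c ∈ 𝒞}, y c ^ 2) := by
          rw [Real.sqrt_mul (mul_nonneg (hp0 i) (hq0 i))]
  -- choose the best index
  obtain ⟨i₀, hi₀⟩ := Finite.exists_max (fun i : Fin N => min (p i) (q i))
  set m : ℝ := min (p i₀) (q i₀) with hm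
  have hm0 : 0 ≤ m := le_min (hp0 i₀) (hq0 i₀)
  have hsup : (⨆ i : Fin N,
      l2OpNorm (Matrix.of fun c c' : {c // c ∈ 𝒞} => Γ c c' * Dmat 𝒞 i c c')) ≤ Real.sqrt m := by
    apply ciSup_le
    intro i
    refine (hMle i).trans (Real.sqrt_le_sqrt ?_)
    have hpqm : p i * q i ≤ min (p i) (q i) :=
      le_min (mul_le_of_le_one_right (hp0 i) (hq1 i))
        (mul_le_of_le_one_left (hq0 i) (hp1 i))
    exact hpqm.trans (hi₀ i)
  have hmain : 1 / 6 ≤ A * Real.sqrt m := by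
    have := (hadv Γ hΓnn hΓdiag).trans (mul_le_mul_of_nonneg_left hsup hA.le)
    linarith
  refine ⟨i₀, ?_⟩
  show 1 / (36 * A ^ 2) ≤ m
  have hsq : Real.sqrt m ^ 2 = m := Real.sq_sqrt hm0
  have h36 : (1 : ℝ) / 36 ≤ (A * Real.sqrt m) ^ 2 := by nlinarith
  rw [div_le_iff₀ (by positivity)]
  nlinarith [Real.sqrt_nonneg m]
end
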